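/- Let a and b be positive elements of a unital C*-algebra A, and define the linear map T : A → A by T(x) = a x - x b. Then the operator norm of T satisfies ‖T‖ ≤ max{‖a‖ - ‖b⁻¹‖⁻¹, ‖b‖ - ‖a⁻¹‖⁻¹}, where ‖a⁻¹‖⁻¹ is interpreted as 0 if a is not invertible, and likewise for b. -/
import Mathlib

section Aux

variable {A : Type*} [CStarAlgebra A] [PartialOrder A] [StarOrderedRing A]

/-- A selfadjoint element squeezed between two scalars has norm bounded by `max β (-α)`. -/
lemma aux_norm_le_of_between {s : A} (hs : IsSelfAdjoint s) {α β : ℝ} (hαβ : α ≤ β)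
    (h1 : algebraMap ℝ A α ≤ s) (h2 : s ≤ algebraMap ℝ A β) :
    ‖s‖ ≤ max β (-α) := by
  obtain hsub | hnt := subsingleton_or_nontrivial A
  · have : s = 0 := Subsingleton.elim _ _
    rw [this, norm_zero]
    rcases le_total β (-α) with h | h
    · rw [max_eq_right h]; linarith
    · rw [max_eq_left h]; linarith
  · have hspec_le : ∀ x ∈ spectrum ℝ s, x ≤ β :=
      (le_algebraMap_iff_spectrum_le (R := ℝ) (a := s) hs).mp h2
    have hspec_ge : ∀ x ∈ spectrum ℝ s, α ≤ x :=
      (algebraMap_le_iff_le_spectrum (R := ℝ) (a := s) hs).mp h1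
    rcases CStarAlgebra.norm_or_neg_norm_mem_spectrum hs with h | h
    · exact le_max_of_le_left (hspec_le _ h)
    · exact le_max_of_le_right (by linarith [hspec_ge _ h])

/-- Lower scalar bound for a positive element via the norm of its `Ring.inverse`. -/
lemma aux_algebraMap_inv_le {a : A} (ha : 0 ≤ a) :
    algebraMap ℝ A (‖Ring.inverse a‖⁻¹) ≤ a := by
  by_cases hu : IsUnit a
  · obtain hsub | hnt := subsingleton_or_nontrivial A
    · exact le_of_eq (Subsingleton.elim _ _)
    · lift a to Aˣ using hu
      rw [Ring.inverse_unit]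
      set c : ℝ := ‖(↑a⁻¹ : A)‖ with hc
      have hinv_nonneg : (0 : A) ≤ ↑a⁻¹ := CFC.inv_nonneg_of_nonneg a ha
      have hne : (↑a⁻¹ : A) ≠ 0 := by
        intro h
        have : (1 : A) = 0 := by
          calc (1 : A) = ↑a⁻¹ * ↑a := by rw [Units.inv_mul]
          _ = 0 := by rw [h, zero_mul]
        exact one_ne_zero this
      have hcpos : 0 < c := norm_pos_iff.mpr hne
      -- the scalar `c` as a unit of `A`
      set v : Aˣ := ⟨algebraMap ℝ A c, algebraMap ℝ A c⁻¹,
        by rw [← map_mul, mul_inv_cancel₀ hcpos.ne', map_one],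
        by rw [← map_mul, inv_mul_cancel₀ hcpos.ne', map_one]⟩ with hv
      have h1 : (↑a⁻¹ : A) ≤ ↑v := by
        simpa [hv, Algebra.algebraMap_eq_smul_one] using
          IsSelfAdjoint.le_algebraMap_norm_self (IsSelfAdjoint.of_nonneg hinv_nonneg)
      have h2 : (↑v⁻¹ : A) ≤ ↑a⁻¹⁻¹ := CStarAlgebra.inv_le_inv hinv_nonneg h1
      simpa [hv] using h2
  · rw [Ring.inverse_non_unit _ hu]
    simpa using ha

/-- The inverse-norm term is below the norm. -/
lemma aux_inv_norm_le {a : A} : ‖Ring.inverse a‖⁻¹ ≤ ‖a‖ := by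
  by_cases hu : IsUnit a
  · obtain hsub | hnt := subsingleton_or_nontrivial A
    · simp [Subsingleton.elim a 0]
    · lift a to Aˣ using hu
      rw [Ring.inverse_unit]
      have hne : (↑a⁻¹ : A) ≠ 0 := by
        intro h
        have : (1 : A) = 0 := by
          calc (1 : A) = ↑a⁻¹ * ↑a := by rw [Units.inv_mul]
          _ = 0 := by rw [h, zero_mul]
        exact one_ne_zero this
      have hcpos : 0 < ‖(↑a⁻¹ : A)‖ := norm_pos_iff.mpr hne
      have h1 : (1 : ℝ) ≤ ‖(↑a⁻¹ : A)‖ * ‖(↑a : A)‖ := by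
        calc (1 : ℝ) = ‖(1 : A)‖ := norm_one.symm
        _ = ‖(↑a⁻¹ : A) * ↑a‖ := by rw [Units.inv_mul]
        _ ≤ ‖(↑a⁻¹ : A)‖ * ‖(↑a : A)‖ := norm_mul_le _ _
      rw [inv_le_iff_one_le_mul₀ hcpos]
      linarith
  · rw [Ring.inverse_non_unit _ hu]
    simpa using norm_nonneg a

/-- Real arithmetic core of the Stampfli bound. -/
lemma aux_real (M₁ m₁ M₂ m₂ : ℝ) :
    max (M₁ - (M₁ + M₂ + m₁ + m₂) / 4) ((M₁ + M₂ + m₁ + m₂) / 4 - m₁) +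
      max (M₂ - (M₁ + M₂ + m₁ + m₂) / 4) ((M₁ + M₂ + m₁ + m₂) / 4 - m₂) ≤
      max (M₁ - m₂) (M₂ - m₁) := by
  rcases max_cases (M₁ - (M₁ + M₂ + m₁ + m₂) / 4) ((M₁ + M₂ + m₁ + m₂) / 4 - m₁) with
    ⟨h1, h1'⟩ | ⟨h1, h1'⟩ <;>
  rcases max_cases (M₂ - (M₁ + M₂ + m₁ + m₂) / 4) ((M₁ + M₂ + m₁ + m₂) / 4 - m₂) with
    ⟨h2, h2'⟩ | ⟨h2, h2'⟩ <;>
  rcases le_total (M₁ - m₂) (M₂ - m₁) with h | h <;>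
  simp only [max_eq_right h, max_eq_left h] <;> linarith

end Aux

/-- **Stampfli-type bound.**  Let `a` and `b` be positive elements of a unital C*-algebra `A`
and let `T : A → A` be the bounded linear map `x ↦ a * x - x * b`.  Then
`‖T‖ ≤ max (‖a‖ - ‖a⁻¹‖⁻¹') (‖b‖ - ‖b⁻¹‖⁻¹')` where the inverse-norm terms are interpreted
as `0` when the element is not invertible (this is exactly the behaviour of `Ring.inverse`,
which returns `0` on non-units, combined with `(0 : ℝ)⁻¹ = 0`). -/
theorem stmt0 {A : Type*} [CStarAlgebra A] [PartialOrder A] [StarOrderedRing A]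
    (a b : A) (ha : 0 ≤ a) (hb : 0 ≤ b) :
    ‖ContinuousLinearMap.mul ℂ A a - (ContinuousLinearMap.mul ℂ A).flip b‖ ≤
      max (‖a‖ - ‖Ring.inverse b‖⁻¹) (‖b‖ - ‖Ring.inverse a‖⁻¹) := by
  set M₁ : ℝ := ‖a‖
  set m₁ : ℝ := ‖Ring.inverse a‖⁻¹
  set M₂ : ℝ := ‖b‖
  set m₂ : ℝ := ‖Ring.inverse b‖⁻¹
  have hm₁ : m₁ ≤ M₁ := aux_inv_norm_le
  have hm₂ : m₂ ≤ M₂ := aux_inv_norm_le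
  have hK : (0 : ℝ) ≤ max (M₁ - m₂) (M₂ - m₁) := by
    rcases le_total (M₁ - m₂) (M₂ - m₁) with h | h
    · rw [max_eq_right h]; linarith
    · rw [max_eq_left h]; linarith
  set l : ℝ := (M₁ + M₂ + m₁ + m₂) / 4 with hl
  set c : A := algebraMap ℝ A l with hcdef
  -- norm bounds on the shifted elements
  have hsa : IsSelfAdjoint (a - c) :=
    (IsSelfAdjoint.of_nonneg ha).sub (IsSelfAdjoint.algebraMap A (star_trivial l))
  have hsb : IsSelfAdjoint (b - c) :=
    (IsSelfAdjoint.of_nonneg hb).sub (IsSelfAdjoint.algebraMap A (star_trivial l))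
  have haub : a - c ≤ algebraMap ℝ A (M₁ - l) := by
    rw [map_sub]
    exact sub_le_sub_right (by
      simpa [Algebra.algebraMap_eq_smul_one] using
        IsSelfAdjoint.le_algebraMap_norm_self (IsSelfAdjoint.of_nonneg ha)) c
  have halb : algebraMap ℝ A (m₁ - l) ≤ a - c := by
    rw [map_sub]
    exact sub_le_sub_right (aux_algebraMap_inv_le ha) c
  have hbub : b - c ≤ algebraMap ℝ A (M₂ - l) := by
    rw [map_sub]
    exact sub_le_sub_right (by
      simpa [Algebra.algebraMap_eq_smul_one] using
        IsSelfAdjoint.le_algebraMap_norm_self (IsSelfAdjoint.of_nonneg hb)) c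
  have hblb : algebraMap ℝ A (m₂ - l) ≤ b - c := by
    rw [map_sub]
    exact sub_le_sub_right (aux_algebraMap_inv_le hb) c
  have hna : ‖a - c‖ ≤ max (M₁ - l) (l - m₁) := by
    have := aux_norm_le_of_between hsa (by linarith : m₁ - l ≤ M₁ - l) halb haub
    simpa [neg_sub] using this
  have hnb : ‖b - c‖ ≤ max (M₂ - l) (l - m₂) := by
    have := aux_norm_le_of_between hsb (by linarith : m₂ - l ≤ M₂ - l) hblb hbub
    simpa [neg_sub] using this
  -- pointwise bound
  apply ContinuousLinearMap.opNorm_le_bound _ hK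
  intro x
  have hx : (ContinuousLinearMap.mul ℂ A a - (ContinuousLinearMap.mul ℂ A).flip b) x
      = a * x - x * b := by
    simp [ContinuousLinearMap.mul_apply']
  rw [hx]
  have hkey : a * x - x * b = (a - c) * x - x * (b - c) := by
    rw [sub_mul, mul_sub, hcdef, Algebra.commutes]
    abel
  calc ‖a * x - x * b‖ = ‖(a - c) * x - x * (b - c)‖ := by rw [hkey]
  _ ≤ ‖(a - c) * x‖ + ‖x * (b - c)‖ := norm_sub_le _ _
  _ ≤ ‖a - c‖ * ‖x‖ + ‖x‖ * ‖b - c‖ := by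
      exact add_le_add (norm_mul_le _ _) (norm_mul_le _ _)
  _ = (‖a - c‖ + ‖b - c‖) * ‖x‖ := by ring
  _ ≤ (max (M₁ - l) (l - m₁) + max (M₂ - l) (l - m₂)) * ‖x‖ := by
      gcongr
  _ ≤ max (M₁ - m₂) (M₂ - m₁) * ‖x‖ := by
      gcongr
      exact aux_real M₁ m₁ M₂ m₂
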